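/- Let Ψ : V → W be a morphism of FI-modules. Assume that W is centrally stable starting at E ≥ 0, that V is boundedly generated in degree E, and that Ψ_J : V_J → W_J is an isomorphism for every finite set J ⊆ ℕ with |J| ≤ E. Then Ψ_J is an isomorphism for every finite set J ⊆ ℕ. -/

import Mathlib

universe u

open DirectSum

/-- The inclusion function `↥I → ↥J` of a pair of finite sets `I ⊆ J ⊆ ℕ`. -/
def finsetIncl {I J : Finset ℕ} (h : I ⊆ J) : I → J := fun x => ⟨x.1, h x.2⟩

theorem finsetIncl_injective {I J : Finset ℕ} (h : I ⊆ J) :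
    Function.Injective (finsetIncl h) := by
  intro a b hab
  exact Subtype.ext (congrArg (fun y : J => (y : ℕ)) hab :)

/-- An **FI-module**: a functor from the category of finite subsets of `ℕ` and injections to
the category of abelian groups. -/
structure FIModule where
  M : Finset ℕ → Type u
  [ab : ∀ I, AddCommGroup (M I)]
  map : ∀ {I J : Finset ℕ} (f : I → J), Function.Injective f → (M I →+ M J)
  map_id : ∀ I : Finset ℕ, map (id : I → I) (fun _ _ h => h) = AddMonoidHom.id (M I)
  map_comp : ∀ {I J K : Finset ℕ} (f : I → J) (g : J → K)
      (hf : Function.Injective f) (hg : Function.Injective g),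
      map (g ∘ f) (hg.comp hf) = (map g hg).comp (map f hf)

attribute [instance] FIModule.ab

/-- The homomorphism `W_I^J : W_I → W_J` induced by an inclusion `I ⊆ J`. -/
def FIModule.incl (W : FIModule.{u}) {I J : Finset ℕ} (h : I ⊆ J) : W.M I →+ W.M J :=
  W.map (finsetIncl h) (finsetIncl_injective h)

/-- `W` is *boundedly generated in degree `A`* if for every finite `J ⊆ ℕ` the map
`⊕_{I ⊆ J, |I| ≤ A} W_I → W_J` is surjective, i.e. `W_J` is the sum of the images of the
`W_I` with `I ⊆ J` and `|I| ≤ A`. -/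
def FIModule.BoundedlyGenerated (W : FIModule.{u}) (A : ℕ) : Prop :=
  ∀ J : Finset ℕ,
    (⨆ (I : Finset ℕ) (hI : I ⊆ J) (_ : I.card ≤ A),
      AddMonoidHom.range (W.incl hI)) = (⊤ : AddSubgroup (W.M J))

/-- The index set for the central stabilization at `J`: the subsets `I ⊆ J` with
`|I| = |J| - 1`. -/
def stabIdx (J : Finset ℕ) : Type :=
  {I : Finset ℕ // I ⊆ J ∧ I.card = J.card - 1}

instance (J : Finset ℕ) : DecidableEq (stabIdx J) := by
  unfold stabIdx; infer_instance

/-- The map `ψ : ⊕_{I ⊆ J, |I| = |J| - 1} W_I → W_J` induced by the maps `W_I^J`. -/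
def stabMap (W : FIModule.{u}) (J : Finset ℕ) :
    (⨁ i : stabIdx J, W.M i.1) →+ W.M J :=
  DirectSum.toAddMonoid fun i => W.incl i.2.1

/-- The image of the map
`η : ⊕_{K ⊆ J, |K| = |J| - 2} W_K → ⊕_{I ⊆ J, |I| = |J| - 1} W_I` whose `K`-component sends
`x` to `(W_K^{I₁}(x), -W_K^{I₂}(x))`, where `I₁, I₂` are the two sets between `K` and `J`.
The central stabilization `Stab(W, J)` is the cokernel of `η`. -/
def etaImage (W : FIModule.{u}) (J : Finset ℕ) :
    AddSubgroup (⨁ i : stabIdx J, W.M i.1) :=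
  AddSubgroup.closure
    {v | ∃ (K : Finset ℕ) (I₁ I₂ : stabIdx J) (hK1 : K ⊆ I₁.1) (hK2 : K ⊆ I₂.1),
      I₁ ≠ I₂ ∧ K.card = J.card - 2 ∧
      ∃ x : W.M K,
        v = DirectSum.of (fun i : stabIdx J => W.M i.1) I₁ (W.incl hK1 x)
          - DirectSum.of (fun i : stabIdx J => W.M i.1) I₂ (W.incl hK2 x)}

/-- `W` is *centrally stable at `J`*: the natural map `Stab(W, J) → W_J` from the central
stabilization is an isomorphism.  Unfolded: the map `ψ : ⊕_{|I| = |J| - 1} W_I → W_J` is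
surjective, and its kernel is exactly the image of `η` (so that
`Stab(W, J) = coker η → W_J` is bijective). -/
def FIModule.CentrallyStableAt (W : FIModule.{u}) (J : Finset ℕ) : Prop :=
  Function.Surjective (stabMap W J) ∧ AddMonoidHom.ker (stabMap W J) = etaImage W J

/-- `W` is *centrally stable starting at `E`* if the natural map `Stab(W, J) → W_J` is an
isomorphism for every finite `J ⊆ ℕ` with `|J| > E`. -/
def FIModule.CentrallyStable (W : FIModule.{u}) (E : ℕ) : Prop :=
  ∀ J : Finset ℕ, E < J.card → W.CentrallyStableAt J

theorem FIModule.incl_incl (U : FIModule.{u}) {K I J : Finset ℕ} (hKI : K ⊆ I) (hIJ : I ⊆ J)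
    (x : U.M K) : U.incl hIJ (U.incl hKI x) = U.incl (hKI.trans hIJ) x := by
  have h := U.map_comp (finsetIncl hKI) (finsetIncl hIJ)
    (finsetIncl_injective hKI) (finsetIncl_injective hIJ)
  have h2 : U.incl (hKI.trans hIJ)
      = U.map (finsetIncl hIJ ∘ finsetIncl hKI)
        ((finsetIncl_injective hIJ).comp (finsetIncl_injective hKI)) := rfl
  rw [h2, h]; rfl

/-- **Central stability propagates along morphisms.**  Let `Ψ : V → W` be a morphism of
FI-modules.  If `W` is centrally stable starting at `E`, `V` is boundedly generated in degree
`E`, and `Ψ_J` is an isomorphism for all finite `J ⊆ ℕ` with `|J| ≤ E`, then `Ψ_J` is an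
isomorphism for every finite set `J ⊆ ℕ`. -/
theorem stmt16 (V W : FIModule.{u}) (E : ℕ)
    (Ψ : ∀ I : Finset ℕ, V.M I →+ W.M I)
    (hnat : ∀ {I J : Finset ℕ} (f : I → J) (hf : Function.Injective f),
      (Ψ J).comp (V.map f hf) = (W.map f hf).comp (Ψ I))
    (hW : W.CentrallyStable E)
    (hV : V.BoundedlyGenerated E)
    (hiso : ∀ J : Finset ℕ, J.card ≤ E → Function.Bijective (Ψ J)) :
    ∀ J : Finset ℕ, Function.Bijective (Ψ J) := by
  have natp : ∀ {I J : Finset ℕ} (h : I ⊆ J) (x : V.M I),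
      Ψ J (V.incl h x) = W.incl h (Ψ I x) := by
    intro I J h x
    exact DFunLike.congr_fun (hnat (finsetIncl h) (finsetIncl_injective h)) x
  suffices h : ∀ n : ℕ, ∀ J : Finset ℕ, J.card ≤ n → Function.Bijective (Ψ J) by
    intro J; exact h J.card J le_rfl
  intro n
  induction n with
  | zero => exact fun J hJ => hiso J (le_trans hJ (Nat.zero_le E))
  | succ n ih =>
    intro J hJ
    by_cases hE : J.card ≤ E
    · exact hiso J hE
    push_neg at hE
    by_cases hJn : J.card ≤ n
    · exact ih J hJn
    push_neg at hJn
    -- hence J.card = n + 1 and E < J.card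
    have hJcard : J.card = n + 1 := le_antisymm hJ hJn
    obtain ⟨hsurjW, hkerW⟩ := hW J hE
    -- bijectivity in lower degrees
    have hidx : ∀ i : stabIdx J, Function.Bijective (Ψ i.1) := by
      intro i
      exact ih i.1 (by rw [i.2.2, hJcard]; omega)
    have hK2 : ∀ K : Finset ℕ, K.card = J.card - 2 → Function.Bijective (Ψ K) := by
      intro K hK
      exact ih K (by rw [hK, hJcard]; omega)
    -- the map Φ : ⊕ V_I → ⊕ W_I
    set Φ : (⨁ i : stabIdx J, V.M i.1) →+ (⨁ i : stabIdx J, W.M i.1) :=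
      DirectSum.toAddMonoid
        (fun i : stabIdx J => (DirectSum.of (fun i : stabIdx J => W.M i.1) i).comp (Ψ i.1))
      with hΦdef
    have Φof : ∀ (i : stabIdx J) (a : V.M i.1),
        Φ (DirectSum.of (fun i : stabIdx J => V.M i.1) i a)
          = DirectSum.of (fun i : stabIdx J => W.M i.1) i (Ψ i.1 a) := by
      intro i a; simp [hΦdef, DirectSum.toAddMonoid_of]
    -- commuting square
    have comm : ∀ x, stabMap W J (Φ x) = Ψ J (stabMap V J x) := by
      intro x
      refine DFunLike.congr_fun (DirectSum.addHom_ext (f := (stabMap W J).comp Φ)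
        (g := (Ψ J).comp (stabMap V J)) fun i a => ?_) x
      simp only [AddMonoidHom.comp_apply, Φof, stabMap, DirectSum.toAddMonoid_of]
      exact (natp i.2.1 a).symm
    -- Φ componentwise
    have Φapply : ∀ (x : ⨁ i : stabIdx J, V.M i.1) (j : stabIdx J),
        Φ x j = Ψ j.1 (x j) := by
      intro x
      refine DirectSum.induction_on x ?_ ?_ ?_
      · intro j; simp
      · intro i a j
        rw [Φof]
        by_cases hij : i = j
        · subst hij; simp [DirectSum.of_apply]
        · simp [DirectSum.of_apply, hij]
      · intro x y hx hy j
        rw [map_add, DirectSum.add_apply, DirectSum.add_apply, map_add, hx, hy]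
    -- Φ injective
    have Φinj : Function.Injective Φ := by
      rw [injective_iff_map_eq_zero]
      intro x hx
      apply DFinsupp.ext (fun j => ?_)
      have : Ψ j.1 (x j) = 0 := by rw [← Φapply x j, hx]; rfl
      exact (hidx j).1 (by simpa using this)
    constructor
    · -- injectivity of Ψ J
      rw [injective_iff_map_eq_zero]
      intro v hv
      -- v lies in the image of stabMap V J
      have hvmem : v ∈ AddMonoidHom.range (stabMap V J) := by
        have htop : v ∈ (⊤ : AddSubgroup (V.M J)) := trivial
        rw [← hV J] at htop
        refine (iSup_le fun I => iSup_le fun hI => iSup_le fun hIc => ?_ :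
          (⨆ (I : Finset ℕ) (hI : I ⊆ J) (_ : I.card ≤ E),
            AddMonoidHom.range (V.incl hI)) ≤ AddMonoidHom.range (stabMap V J)) htop
        rintro _ ⟨a, rfl⟩
        obtain ⟨I', hII', hI'J, hI'c⟩ :=
          Finset.exists_subsuperset_card_eq (n := J.card - 1) hI (by omega) (by omega)
        refine ⟨DirectSum.of (fun i : stabIdx J => V.M i.1) ⟨I', hI'J, hI'c⟩
          (V.incl hII' a), ?_⟩
        refine (DirectSum.toAddMonoid_of (fun i : stabIdx J => V.incl i.2.1) _ _).trans ?_
        exact V.incl_incl hII' hI'J a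
      obtain ⟨x, rfl⟩ := hvmem
      have hker : Φ x ∈ AddMonoidHom.ker (stabMap W J) := by
        rw [AddMonoidHom.mem_ker, comm, hv]
      rw [hkerW] at hker
      -- etaImage W ⊆ Φ '' etaImage V
      have hsub : etaImage W J ≤ AddSubgroup.map Φ (etaImage V J) := by
        rw [etaImage]
        refine AddSubgroup.closure_le _ |>.mpr ?_
        rintro w ⟨K, I₁, I₂, hK1, hK2i, hne, hKc, y, rfl⟩
        obtain ⟨z, rfl⟩ := (hK2 K hKc).2 y
        refine ⟨DirectSum.of (fun i : stabIdx J => V.M i.1) I₁ (V.incl hK1 z)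
          - DirectSum.of (fun i : stabIdx J => V.M i.1) I₂ (V.incl hK2i z), ?_, ?_⟩
        · exact AddSubgroup.subset_closure ⟨K, I₁, I₂, hK1, hK2i, hne, hKc, z, rfl⟩
        · rw [map_sub, Φof, Φof, natp, natp]
      have hx' := hsub hker
      obtain ⟨x', hx'mem, hx'eq⟩ := hx'
      have hxx : x = x' := Φinj hx'eq.symm
      subst hxx
      -- stabMap V J kills etaImage V J
      have hkill : etaImage V J ≤ AddMonoidHom.ker (stabMap V J) := by
        rw [etaImage]
        refine AddSubgroup.closure_le _ |>.mpr ?_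
        rintro w ⟨K, I₁, I₂, hK1, hK2i, hne, hKc, y, rfl⟩
        rw [SetLike.mem_coe, AddMonoidHom.mem_ker, map_sub, stabMap,
          DirectSum.toAddMonoid_of, DirectSum.toAddMonoid_of,
          V.incl_incl hK1 I₁.2.1, V.incl_incl hK2i I₂.2.1, sub_self]
      exact hkill hx'mem
    · -- surjectivity of Ψ J
      intro w
      obtain ⟨x, rfl⟩ := hsurjW w
      have : ∀ x, stabMap W J x ∈ AddMonoidHom.range (Ψ J) := by
        intro x
        refine DirectSum.induction_on x ?_ ?_ ?_
        · exact ⟨0, by simp⟩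
        · intro i a
          obtain ⟨b, rfl⟩ := (hidx i).2 a
          exact ⟨V.incl i.2.1 b, by rw [natp, stabMap, DirectSum.toAddMonoid_of]⟩
        · rintro x y ⟨a, ha⟩ ⟨b, hb⟩
          exact ⟨a + b, by rw [map_add, map_add, ha, hb]⟩
      exact this x
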